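/- In the graph H_z with even z ≥ 2, running the greedy ranking algorithm where u_1, ..., u_z arrive in order and each u_i is matched to its highest-indexed unmatched neighbor v_j produces a matching of size exactly z/2 + 1. -/
import Mathlib


/-- Neighbourhood of `u_i` in the graph `H_z`. -/
def HzNbrs (z i : ℕ) : Finset ℕ :=
  if i ≤ z / 2 then
    (Finset.Icc 1 z).filter (fun j => j = 2 * i - 1 ∨ j = 2 * i ∨ j = 2 * i + 1)
  else {2 * i - z - 1}

/-- Set of `V`-vertices matched after greedily processing `u_1, …, u_i` in order,
matching each `u_i` to its *highest-indexed* unmatched neighbour. -/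
def greedyMaxMatched (z : ℕ) : ℕ → Finset ℕ
  | 0 => ∅
  | i + 1 =>
      let M := greedyMaxMatched z i
      let av := HzNbrs z (i + 1) \ M
      if h : av.Nonempty then insert (av.max' h) M else M

namespace HzAux

/-- Matched set in the first phase: `{3, 5, …, 2i+1}`. -/
def S (i : ℕ) : Finset ℕ := (Finset.Icc 1 i).image (fun j => 2 * j + 1)

lemma mem_S {i x : ℕ} : x ∈ S i ↔ ∃ j, 1 ≤ j ∧ j ≤ i ∧ x = 2 * j + 1 := by
  simp only [S, Finset.mem_image, Finset.mem_Icc]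
  constructor
  · rintro ⟨j, ⟨h1, h2⟩, h3⟩; exact ⟨j, h1, h2, h3.symm⟩
  · rintro ⟨j, h1, h2, h3⟩; exact ⟨j, ⟨h1, h2⟩, h3.symm⟩

lemma phase1 (m : ℕ) : ∀ i, i + 1 ≤ m → greedyMaxMatched (2 * m) i = S i := by
  intro i
  induction i with
  | zero => intro _; simp [greedyMaxMatched, S]
  | succ i ih =>
    intro hi
    have hdiv : 2 * m / 2 = m := by omega
    rw [greedyMaxMatched, ih (by omega)]
    have hn : HzNbrs (2 * m) (i + 1) = {2 * i + 1, 2 * i + 2, 2 * i + 3} := by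
      rw [HzNbrs, if_pos (by omega : i + 1 ≤ 2 * m / 2)]
      ext x
      simp only [Finset.mem_filter, Finset.mem_Icc, Finset.mem_insert,
        Finset.mem_singleton]
      omega
    simp only [hn]
    set av := ({2 * i + 1, 2 * i + 2, 2 * i + 3} : Finset ℕ) \ S i with hav
    have hmem : 2 * i + 3 ∈ av := by
      rw [hav, Finset.mem_sdiff]
      constructor
      · simp
      · rw [mem_S]; push_neg; intro j h1 h2; omega
    have hne : av.Nonempty := ⟨_, hmem⟩
    have hmax : av.max' hne = 2 * i + 3 := by
      apply le_antisymm
      · apply Finset.max'_le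
        intro x hx
        rw [hav, Finset.mem_sdiff] at hx
        simp only [Finset.mem_insert, Finset.mem_singleton] at hx
        omega
      · exact Finset.le_max' _ _ hmem
    rw [dif_pos hne, hmax]
    ext x
    simp only [Finset.mem_insert, mem_S]
    constructor
    · rintro (rfl | ⟨j, h1, h2, rfl⟩)
      · exact ⟨i + 1, by omega, by omega, by ring⟩
      · exact ⟨j, by omega, by omega, rfl⟩
    · rintro ⟨j, h1, h2, rfl⟩
      rcases Nat.lt_or_ge j (i + 1) with h | h
      · exact Or.inr ⟨j, by omega, by omega, rfl⟩
      · left; omega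

lemma phase2 (m : ℕ) (hm : 1 ≤ m) :
    greedyMaxMatched (2 * m) m = insert (2 * m) (S (m - 1)) := by
  obtain ⟨k, rfl⟩ : ∃ k, m = k + 1 := ⟨m - 1, by omega⟩
  have hdiv : 2 * (k + 1) / 2 = k + 1 := by omega
  rw [greedyMaxMatched, phase1 (k + 1) k (by omega)]
  have hn : HzNbrs (2 * (k + 1)) (k + 1) = {2 * k + 1, 2 * k + 2} := by
    rw [HzNbrs, if_pos (by omega : k + 1 ≤ 2 * (k + 1) / 2)]
    ext x
    simp only [Finset.mem_filter, Finset.mem_Icc, Finset.mem_insert,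
      Finset.mem_singleton]
    omega
  simp only [hn]
  set av := ({2 * k + 1, 2 * k + 2} : Finset ℕ) \ S k with hav
  have hmem : 2 * k + 2 ∈ av := by
    rw [hav, Finset.mem_sdiff]
    constructor
    · simp
    · rw [mem_S]; push_neg; intro j h1 h2; omega
  have hne : av.Nonempty := ⟨_, hmem⟩
  have hmax : av.max' hne = 2 * k + 2 := by
    apply le_antisymm
    · apply Finset.max'_le
      intro x hx
      rw [hav, Finset.mem_sdiff] at hx
      simp only [Finset.mem_insert, Finset.mem_singleton] at hx
      omega
    · exact Finset.le_max' _ _ hmem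
  have h2 : 2 * (k + 1) = 2 * k + 2 := by ring
  have h3 : k + 1 - 1 = k := rfl
  rw [dif_pos hne, hmax, h2, h3]

lemma phase2' (m : ℕ) (hm : 1 ≤ m) :
    greedyMaxMatched (2 * m) (m + 1) = insert 1 (insert (2 * m) (S (m - 1))) := by
  have hdiv : 2 * m / 2 = m := by omega
  rw [greedyMaxMatched, phase2 m hm]
  have hn : HzNbrs (2 * m) (m + 1) = {1} := by
    rw [HzNbrs, if_neg (by omega)]
    congr 1
    omega
  simp only [hn]
  set av := ({1} : Finset ℕ) \ insert (2 * m) (S (m - 1)) with hav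
  have hmem : 1 ∈ av := by
    rw [hav, Finset.mem_sdiff]
    refine ⟨by simp, ?_⟩
    simp only [Finset.mem_insert, mem_S]
    push_neg
    exact ⟨by omega, fun j h1 h2 => by omega⟩
  have hne : av.Nonempty := ⟨_, hmem⟩
  have hmax : av.max' hne = 1 := by
    apply le_antisymm
    · apply Finset.max'_le
      intro x hx
      rw [hav, Finset.mem_sdiff, Finset.mem_singleton] at hx
      omega
    · exact Finset.le_max' _ _ hmem
  rw [dif_pos hne, hmax]

lemma phase3 (m : ℕ) (hm : 1 ≤ m) :
    ∀ d, m + 1 + d ≤ 2 * m →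
      greedyMaxMatched (2 * m) (m + 1 + d) = insert 1 (insert (2 * m) (S (m - 1))) := by
  intro d
  induction d with
  | zero => intro _; exact phase2' m hm
  | succ d ih =>
    intro hd
    have : m + 1 + (d + 1) = (m + 1 + d) + 1 := by omega
    rw [this, greedyMaxMatched, ih (by omega)]
    have hn : HzNbrs (2 * m) (m + 1 + d + 1) = {2 * d + 3} := by
      rw [HzNbrs, if_neg (by omega)]
      congr 1
      omega
    simp only [hn]
    have hav : ({2 * d + 3} : Finset ℕ) \ insert 1 (insert (2 * m) (S (m - 1))) = ∅ := by
      rw [Finset.sdiff_eq_empty_iff_subset]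
      intro x hx
      rw [Finset.mem_singleton] at hx
      subst hx
      simp only [Finset.mem_insert, mem_S]
      right; right
      exact ⟨d + 1, by omega, by omega, by ring⟩
    rw [dif_neg (by rw [hav]; exact Finset.not_nonempty_empty)]

lemma card_S (i : ℕ) : (S i).card = i := by
  rw [S, Finset.card_image_of_injective _ (fun a b h => by omega)]
  simp

end HzAux

/-- Greedy ranking with decreasing ranks on `H_z` (even `z ≥ 2`) produces a matching
of size exactly `z/2 + 1`. -/
theorem Hz_greedy_max_card (z : ℕ) (hz : 2 ≤ z) (hze : Even z) :
    (greedyMaxMatched z z).card = z / 2 + 1 := by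
  obtain ⟨m, rfl⟩ : ∃ m, z = 2 * m := ⟨z / 2, by obtain ⟨k, hk⟩ := hze; omega⟩
  have hm : 1 ≤ m := by omega
  have key := HzAux.phase3 m hm (m - 1) (by omega)
  rw [show m + 1 + (m - 1) = 2 * m by omega] at key
  rw [key]
  rw [Finset.card_insert_of_notMem, Finset.card_insert_of_notMem, HzAux.card_S]
  · omega
  · rw [HzAux.mem_S]; push_neg; intro j h1 h2; omega
  · simp only [Finset.mem_insert, HzAux.mem_S]
    push_neg
    exact ⟨by omega, fun j h1 h2 => by omega⟩
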